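/- Consider misère NimG-RM on a graph G with a loop on every vertex and strictly positive weight function w, starting at a vertex u with w(u) = 1. Let T = {v ∈ V(G) : w(v) ≥ 2} and let C_u be the connected component of u in the graph G ∖ T (vertices of T deleted). Then the misère outcome of (G,u,w) equals the misère outcome of (C_u,u,w restricted to C_u); in particular any move leaving C_u is a losing move. -/

import Mathlib

universe u
mutual
  inductive GNormalWin {α : Type u} (moves : α → α → Prop) : α → Prop
    | step {p q : α} : moves p q → GNormalLose moves q → GNormalWin moves p
  inductive GNormalLose {α : Type u} (moves : α → α → Prop) : α → Prop
    | intro {p : α} : (∀ q, moves p q → GNormalWin moves q) → GNormalLose moves p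
end

mutual
  inductive GMisereWin {α : Type u} (moves : α → α → Prop) : α → Prop
    | terminal {p : α} : (∀ q, ¬ moves p q) → GMisereWin moves p
    | step {p q : α} : moves p q → GMisereLose moves q → GMisereWin moves p
  inductive GMisereLose {α : Type u} (moves : α → α → Prop) : α → Prop
    | intro {p q₀ : α} : moves p q₀ → (∀ q, moves p q → GMisereWin moves q) → GMisereLose moves p
end

def nimMove {V : Type u} (adj : V → V → Prop) (p q : V × (V → ℕ)) : Prop :=
  adj p.1 q.1 ∧ q.2 p.1 < p.2 p.1 ∧ ∀ v, v ≠ p.1 → q.2 v = p.2 v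

mutual
  inductive NimRMWin {V : Type u} (adj : V → V → Prop) : V × (V → ℕ) → Prop
    | zero {p} : p.2 p.1 = 0 → NimRMWin adj p
    | step {p q} : nimMove adj p q → NimRMLose adj q → NimRMWin adj p
  inductive NimRMLose {V : Type u} (adj : V → V → Prop) : V × (V → ℕ) → Prop
    | intro {p} : p.2 p.1 ≠ 0 → (∀ q, nimMove adj p q → NimRMWin adj q) → NimRMLose adj p
end

def vgMove {V : Type u} (A : V → V → Prop) (p q : Set V × V) : Prop :=
  A p.2 q.2 ∧ q.2 ∈ p.1 ∧ q.2 ≠ p.2 ∧ q.1 = p.1 \ {p.2}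

def addOut {V : Type u} (A : V → V → Prop) : V ⊕ V → V ⊕ V → Prop
  | .inl a, .inl b => A a b
  | .inl a, .inr b => a = b
  | _, _ => False

def MaxMatching {V : Type u} (G : SimpleGraph V) (M : G.Subgraph) : Prop :=
  M.IsMatching ∧ ∀ N : G.Subgraph, N.IsMatching → N.edgeSet.ncard ≤ M.edgeSet.ncard

/-- The graph `G` with all vertices of weight at least 2 deleted. -/
def delHeavy {V : Type u} (G : SimpleGraph V) (w : V → ℕ) : SimpleGraph V where
  Adj a b := G.Adj a b ∧ w a < 2 ∧ w b < 2
  symm := ⟨fun a b h => ⟨h.1.symm, h.2.2, h.2.1⟩⟩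
  loopless := ⟨fun a h => G.loopless.irrefl a h.1⟩

section NimGAux

variable {V : Type} [Fintype V]

lemma nimMove_sum_lt {adj : V → V → Prop} {p q : V × (V → ℕ)}
    (h : nimMove adj p q) : ∑ v, q.2 v < ∑ v, p.2 v := by
  refine Finset.sum_lt_sum (fun i _ => ?_) ⟨p.1, Finset.mem_univ _, h.2.1⟩
  by_cases hv : i = p.1
  · subst hv; exact le_of_lt h.2.1
  · exact le_of_eq (h.2.2 i hv)

lemma nim_not_both {adj : V → V → Prop} :
    ∀ N (p : V × (V → ℕ)), ∑ v, p.2 v ≤ N →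
      NimRMWin adj p → NimRMLose adj p → False := by
  intro N
  induction N with
  | zero =>
    intro p hp hw hl
    cases hw with
    | zero h0 => cases hl with | intro hne _ => exact hne h0
    | step hm hq => have := nimMove_sum_lt hm; omega
  | succ N ih =>
    intro p hp hw hl
    cases hw with
    | zero h0 => cases hl with | intro hne _ => exact hne h0
    | step hm hq =>
      cases hl with
      | intro hne hall =>
        have := nimMove_sum_lt hm
        exact ih _ (by omega) (hall _ hm) hq

lemma nim_em {adj : V → V → Prop} :
    ∀ N (p : V × (V → ℕ)), ∑ v, p.2 v ≤ N →
      NimRMWin adj p ∨ NimRMLose adj p := by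
  intro N
  induction N with
  | zero =>
    intro p hp
    have : p.2 p.1 ≤ ∑ v, p.2 v :=
      Finset.single_le_sum (fun i _ => Nat.zero_le _) (Finset.mem_univ p.1)
    left; exact NimRMWin.zero (by omega)
  | succ N ih =>
    intro p hp
    by_cases h0 : p.2 p.1 = 0
    · left; exact NimRMWin.zero h0
    by_cases hex : ∃ q, nimMove adj p q ∧ NimRMLose adj q
    · obtain ⟨q, hm, hl⟩ := hex
      left; exact NimRMWin.step hm hl
    · right
      refine NimRMLose.intro h0 (fun q hq => ?_)
      have hlt := nimMove_sum_lt hq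
      rcases ih q (by omega) with h | h
      · exact h
      · exact absurd ⟨q, hq, h⟩ hex

lemma heavy_win {G : SimpleGraph V} {w' : V → ℕ} {x : V} (hx : 2 ≤ w' x) :
    NimRMWin (fun a b => G.Adj a b ∨ a = b) (x, w') := by
  classical
  set w1 := Function.update w' x 1 with hw1
  have h1x : w1 x = 1 := Function.update_self x 1 w'
  rcases nim_em (∑ v, w1 v) (x, w1) le_rfl with hw | hl
  · cases hw with
    | zero h0 => simp only at h0; omega
    | step hm hl =>
      rename_i q
      refine NimRMWin.step (q := q)
        ⟨hm.1, ?_, fun v hv => (hm.2.2 v hv).trans (Function.update_of_ne hv _ _)⟩ hl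
      have : q.2 x < 1 := by have := hm.2.1; simpa [h1x] using this
      simp only; omega
  · refine NimRMWin.step (q := (x, w1))
      ⟨Or.inr rfl, ?_, fun v hv => Function.update_of_ne hv _ _⟩ hl
    simp only [h1x]; omega

omit [Fintype V] in
lemma walk_light {G : SimpleGraph V} {w : V → ℕ} {a b : V}
    (p : (delHeavy G w).Walk a b) (ha : w a < 2) : w b < 2 := by
  induction p with
  | nil => exact ha
  | cons h _ ih => exact ih h.2.2

omit [Fintype V] in
lemma reach_light {G : SimpleGraph V} {w : V → ℕ} {u : V} (hu : w u < 2) {y : V}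
    (h : (delHeavy G w).Reachable u y) : w y < 2 := by
  obtain ⟨p⟩ := h
  exact walk_light p hu

lemma nim_key (G : SimpleGraph V) (w : V → ℕ) (hw : ∀ v, 0 < w v)
    (u : V) (h1 : w u = 1) :
    ∀ N (w' : V → ℕ) (x : V), ∑ v, w' v ≤ N →
      (∀ v, ¬ (delHeavy G w).Reachable u v → w' v = w v) →
      (∀ v, (delHeavy G w).Reachable u v → w' v ≤ 1) →
      (delHeavy G w).Reachable u x → w' x = 1 →
      ((NimRMWin (fun a b => G.Adj a b ∨ a = b) (x, w') ↔
        NimRMWin (fun a b => ((delHeavy G w).Adj a b ∨ a = b) ∧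
          (delHeavy G w).Reachable u a ∧ (delHeavy G w).Reachable u b) (x, w')) ∧
       (NimRMLose (fun a b => G.Adj a b ∨ a = b) (x, w') ↔
        NimRMLose (fun a b => ((delHeavy G w).Adj a b ∨ a = b) ∧
          (delHeavy G w).Reachable u a ∧ (delHeavy G w).Reachable u b) (x, w'))) := by
  classical
  intro N
  induction N with
  | zero =>
    intro w' x hs _ _ _ hx1
    exfalso
    have : w' x ≤ ∑ v, w' v :=
      Finset.single_le_sum (fun i _ => Nat.zero_le _) (Finset.mem_univ x)
    omega
  | succ N ih =>
    intro w' x hs hoff hon hrx hx1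
    set A1 : V → V → Prop := fun a b => G.Adj a b ∨ a = b with hA1
    set A2 : V → V → Prop := fun a b => ((delHeavy G w).Adj a b ∨ a = b) ∧
      (delHeavy G w).Reachable u a ∧ (delHeavy G w).Reachable u b with hA2
    set w0 := Function.update w' x 0 with hw0
    have hw0x : w0 x = 0 := Function.update_self _ _ _
    have hw0ne : ∀ v, v ≠ x → w0 v = w' v := fun v hv => Function.update_of_ne hv _ _
    have hsum0 : ∑ v, w0 v ≤ N := by
      have h : ∑ v, w0 v < ∑ v, w' v := by
        refine Finset.sum_lt_sum (fun i _ => ?_) ⟨x, Finset.mem_univ x, by omega⟩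
        by_cases hv : i = x
        · subst hv; omega
        · exact le_of_eq (hw0ne i hv)
      omega
    have hwx2 : w x < 2 := reach_light (by omega) hrx
    -- any move from (x, w') has weight function w0
    have hq2 : ∀ (adj : V → V → Prop) (q : V × (V → ℕ)), nimMove adj (x, w') q → q.2 = w0 := by
      intro adj q hq
      funext v
      by_cases hv : v = x
      · rw [hv]
        have h : q.2 x < w' x := hq.2.1
        omega
      · rw [hq.2.2 v hv, hw0ne v hv]
    -- IH applies at (y, w0) for good y
    have hIH : ∀ y, G.Adj x y → (delHeavy G w).Reachable u y → w' y = 1 →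
        ((NimRMWin A1 (y, w0) ↔ NimRMWin A2 (y, w0)) ∧
         (NimRMLose A1 (y, w0) ↔ NimRMLose A2 (y, w0))) := by
      intro y hadj hry hy1
      have hyx : y ≠ x := fun h => G.loopless.irrefl x (h ▸ hadj)
      refine ih w0 y hsum0 ?_ ?_ hry ?_
      · intro v hv
        have hvx : v ≠ x := fun h => hv (h ▸ hrx)
        rw [hw0ne v hvx]; exact hoff v hv
      · intro v hv
        by_cases hvx : v = x
        · subst hvx; omega
        · rw [hw0ne v hvx]; exact hon v hv
      · rw [hw0ne y hyx]; exact hy1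
    have hC1 : NimRMWin A1 (x, w') ↔
        ∃ y, G.Adj x y ∧ (delHeavy G w).Reachable u y ∧ w' y = 1 ∧ NimRMLose A1 (y, w0) := by
      constructor
      · intro hwin
        cases hwin with
        | zero h0 => exfalso; have : w' x = 0 := h0; omega
        | step hm hl =>
          rename_i q
          obtain ⟨y, v2⟩ := q
          have hv2 : v2 = w0 := hq2 A1 (y, v2) hm
          subst hv2
          have hyne : y ≠ x ∧ w' y ≠ 0 := by
            have hne : w0 y ≠ 0 := by cases hl with | intro hne _ => exact hne
            by_cases h : y = x
            · subst h; exact absurd hw0x hne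
            · exact ⟨h, by rw [← hw0ne y h]; exact hne⟩
          have hadj : G.Adj x y := by
            rcases hm.1 with h | h
            · exact h
            · exact absurd h.symm hyne.1
          have hry : (delHeavy G w).Reachable u y := by
            by_contra hnr
            have hwy : w' y = w y := hoff y hnr
            by_cases h2 : 2 ≤ w y
            · have hwin' : NimRMWin A1 (y, w0) :=
                heavy_win (by rw [hw0ne y hyne.1, hwy]; exact h2)
              exact nim_not_both _ _ le_rfl hwin' hl
            · exact hnr (hrx.trans (SimpleGraph.Adj.reachable
                (⟨hadj, by omega, by omega⟩ : (delHeavy G w).Adj x y)))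
          have hy1 : w' y = 1 := by have := hon y hry; omega
          exact ⟨y, hadj, hry, hy1, hl⟩
      · rintro ⟨y, hadj, hry, hy1, hl⟩
        exact NimRMWin.step (q := (y, w0))
          ⟨Or.inl hadj, by show w0 x < w' x; omega, fun v hv => hw0ne v hv⟩ hl
    have hC2 : NimRMWin A2 (x, w') ↔
        ∃ y, G.Adj x y ∧ (delHeavy G w).Reachable u y ∧ w' y = 1 ∧ NimRMLose A2 (y, w0) := by
      constructor
      · intro hwin
        cases hwin with
        | zero h0 => exfalso; have : w' x = 0 := h0; omega
        | step hm hl =>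
          rename_i q
          obtain ⟨y, v2⟩ := q
          have hv2 : v2 = w0 := hq2 A2 (y, v2) hm
          subst hv2
          have hyne : y ≠ x ∧ w' y ≠ 0 := by
            have hne : w0 y ≠ 0 := by cases hl with | intro hne _ => exact hne
            by_cases h : y = x
            · subst h; exact absurd hw0x hne
            · exact ⟨h, by rw [← hw0ne y h]; exact hne⟩
          have hadj : G.Adj x y := by
            rcases hm.1.1 with h | h
            · exact h.1
            · exact absurd h.symm hyne.1
          have hry : (delHeavy G w).Reachable u y := hm.1.2.2
          have hy1 : w' y = 1 := by have := hon y hry; omega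
          exact ⟨y, hadj, hry, hy1, hl⟩
      · rintro ⟨y, hadj, hry, hy1, hl⟩
        have hwy2 : w y < 2 := reach_light (by omega) hry
        exact NimRMWin.step (q := (y, w0))
          ⟨⟨Or.inl ⟨hadj, hwx2, hwy2⟩, hrx, hry⟩, by show w0 x < w' x; omega,
            fun v hv => hw0ne v hv⟩ hl
    have hWiff : NimRMWin A1 (x, w') ↔ NimRMWin A2 (x, w') := by
      rw [hC1, hC2]
      constructor
      · rintro ⟨y, h1', h2', h3', h4'⟩
        exact ⟨y, h1', h2', h3', ((hIH y h1' h2' h3').2).mp h4'⟩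
      · rintro ⟨y, h1', h2', h3', h4'⟩
        exact ⟨y, h1', h2', h3', ((hIH y h1' h2' h3').2).mpr h4'⟩
    refine ⟨hWiff, ?_, ?_⟩
    · intro hl
      refine NimRMLose.intro (by show w' x ≠ 0; omega) ?_
      intro q hq
      obtain ⟨y, v2⟩ := q
      have hv2 : v2 = w0 := hq2 A2 (y, v2) hq
      subst hv2
      by_cases h0 : w0 y = 0
      · exact NimRMWin.zero h0
      · have hyx : y ≠ x := fun h => h0 (h ▸ hw0x)
        have hry : (delHeavy G w).Reachable u y := hq.1.2.2
        have hy1 : w' y = 1 := by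
          have h := hon y hry
          have h' := hw0ne y hyx
          omega
        have hadj : G.Adj x y := by
          rcases hq.1.1 with h | h
          · exact h.1
          · exact absurd h.symm hyx
        rcases nim_em (adj := A1) (∑ v, w0 v) (y, w0) le_rfl with hwin | hlose
        · exact ((hIH y hadj hry hy1).1).mp hwin
        · exfalso
          have hwin' : NimRMWin A1 (x, w') := hC1.mpr ⟨y, hadj, hry, hy1, hlose⟩
          exact nim_not_both _ _ le_rfl hwin' hl
    · intro hl
      rcases nim_em (adj := A1) (∑ v, w' v) (x, w') le_rfl with hwin | hlose
      · exact absurd (nim_not_both _ _ le_rfl (hWiff.mp hwin) hl) not_false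
      · exact hlose

end NimGAux

/-- Misère NimG-RM with loops everywhere, starting on a weight-1 vertex: the outcome equals
the outcome of the game restricted to the connected component of `u` in `G` minus the
vertices of weight at least 2. -/
theorem stmt6 {V : Type} [Fintype V] (G : SimpleGraph V) (w : V → ℕ) (hw : ∀ v, 0 < w v)
    (u : V) (h1 : w u = 1) :
    (NimRMWin (fun a b => G.Adj a b ∨ a = b) (u, w) ↔
      NimRMWin (fun a b => ((delHeavy G w).Adj a b ∨ a = b) ∧
        (delHeavy G w).Reachable u a ∧ (delHeavy G w).Reachable u b) (u, w)) := by
  have hkey := nim_key G w hw u h1 (∑ v, w v) w u le_rfl (fun v _ => rfl)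
    (fun v hv => by have := reach_light (by omega) hv; omega)
    (SimpleGraph.Reachable.refl u) h1
  exact hkey.1
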